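/- Let h : ℝⁿ → ℝ and B : ℝⁿ×ℝⁿ → ℝ be C² on neighbourhoods of 0 and (0,0) respectively, and let c ∈ ℝ be such that the n×n matrix (∂²B/∂y∂Y)(0,0) + 2cI is invertible. Define g(y,Y) = h(y) + c·Σⱼ(Yⱼ+yⱼ)² + B(y,Y). Then there exist a neighbourhood of ((∇_y g)(0,0), 0) in ℝⁿ×ℝⁿ and a C¹ map (x,y) ↦ Ŷ(x,y) on it with Ŷ((∇_y g)(0,0), 0) = 0 and x = ∇_y g(y, Ŷ(x,y)), such that: (i) the map φ(x,y) := (−∇_Y g(y, Ŷ(x,y)), Ŷ(x,y)) is symplectic for the standard symplectic form on ℝ^{2n}, and (ii) for all (y,Y) in a neighbourhood of (0,0), setting x := ∇_y B(y,Y), one has φ(x,y) = (−∇_Y B(y,Y), Y) if and only if (y,Y) is a critical point of (y,Y) ↦ h(y) + c·Σⱼ(Yⱼ+yⱼ)². (The paper's Proposition: for any gradient-zero problem ∇h = 0 and any separated Lagrangian boundary condition generated by B, there is a locally defined symplectic map whose boundary value problem φ^X(∇_yB(y,Y), y) = −∇_YB(y,Y) has the same bifurcation behaviour as ∇h(y)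 = 0.) -/

import Mathlib

/-- The standard symplectic form on `ℝ^{2n} = ℝⁿ × ℝⁿ`. -/
noncomputable def stdOmega (n : ℕ) (v w : (Fin n → ℝ) × (Fin n → ℝ)) : ℝ :=
  ∑ i, v.1 i * w.2 i - ∑ i, w.1 i * v.2 i

/-- Gradient of a function on `ℝⁿ × ℝⁿ` with respect to the first group of variables. -/
noncomputable def gradFst (n : ℕ) (g : (Fin n → ℝ) × (Fin n → ℝ) → ℝ)
    (p : (Fin n → ℝ) × (Fin n → ℝ)) : Fin n → ℝ :=
  fun i => fderiv ℝ g p (Pi.single i 1, 0)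

/-- Gradient of a function on `ℝⁿ × ℝⁿ` with respect to the second group of variables. -/
noncomputable def gradSnd (n : ℕ) (g : (Fin n → ℝ) × (Fin n → ℝ) → ℝ)
    (p : (Fin n → ℝ) × (Fin n → ℝ)) : Fin n → ℝ :=
  fun i => fderiv ℝ g p (0, Pi.single i 1)

/-- The symplectic map generated by `g(y,Y)` via `x = ∇_y g(y, Ŷ(x,y))`,
`φ(x,y) = (−∇_Y g(y, Ŷ(x,y)), Ŷ(x,y))`. -/
noncomputable def genMap (n : ℕ) (g : (Fin n → ℝ) × (Fin n → ℝ) → ℝ)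
    (Yhat : (Fin n → ℝ) × (Fin n → ℝ) → (Fin n → ℝ)) :
    (Fin n → ℝ) × (Fin n → ℝ) → (Fin n → ℝ) × (Fin n → ℝ) :=
  fun p => (-(gradSnd n g (p.2, Yhat p)), Yhat p)

open scoped Topology
open Filter Set

section Helpers
variable {n : ℕ}

lemma vec_expand (b : Fin n → ℝ) : ∑ i, b i • (Pi.single i 1 : Fin n → ℝ) = b := by
  ext k
  simp [Finset.sum_apply, Pi.single_apply]

lemma pair_expand (p : (Fin n → ℝ) × (Fin n → ℝ)) :
    p = (∑ i, p.1 i • ((Pi.single i 1 : Fin n → ℝ), (0 : Fin n → ℝ)))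
      + (∑ j, p.2 j • ((0 : Fin n → ℝ), (Pi.single j 1 : Fin n → ℝ))) := by
  apply Prod.ext <;> simp [Prod.fst_sum, Prod.snd_sum, vec_expand]

lemma clm_expand (L : (Fin n → ℝ) × (Fin n → ℝ) →L[ℝ] ℝ) (p : (Fin n → ℝ) × (Fin n → ℝ)) :
    L p = ∑ i, p.1 i * L (Pi.single i 1, 0) + ∑ j, p.2 j * L (0, Pi.single j 1) := by
  conv_lhs => rw [pair_expand p]
  rw [map_add, map_sum, map_sum]
  congr 1 <;> refine Finset.sum_congr rfl fun i _ => ?_ <;> rw [map_smul, smul_eq_mul]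

lemma clm_eq_zero_iff (L : (Fin n → ℝ) × (Fin n → ℝ) →L[ℝ] ℝ) :
    L = 0 ↔ (∀ i, L (Pi.single i 1, 0) = 0) ∧ (∀ j, L (0, Pi.single j 1) = 0) := by
  constructor
  · intro hL; simp [hL]
  · rintro ⟨h1, h2⟩
    refine ContinuousLinearMap.ext fun p => ?_
    rw [clm_expand]
    simp [h1, h2]

/-- expansion in the second slot -/
lemma clm_snd_expand (L : (Fin n → ℝ) × (Fin n → ℝ) →L[ℝ] ℝ) (b : Fin n → ℝ) :
    L ((0 : Fin n → ℝ), b) = ∑ j, L (0, Pi.single j 1) * b j := by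
  rw [clm_expand]
  simp only [Pi.zero_apply, zero_mul, Finset.sum_const_zero, zero_add]
  exact Finset.sum_congr rfl fun j _ => mul_comm _ _

lemma clm_fst_expand (L : (Fin n → ℝ) × (Fin n → ℝ) →L[ℝ] ℝ) (a : Fin n → ℝ) :
    L (a, (0 : Fin n → ℝ)) = ∑ i, L (Pi.single i 1, 0) * a i := by
  rw [clm_expand]
  simp only [Pi.zero_apply, zero_mul, Finset.sum_const_zero, add_zero]
  exact Finset.sum_congr rfl fun j _ => mul_comm _ _

/-- derivative of `p ↦ (fun i => f' (σ p) (vs i))`. -/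
lemma hasFDerivAt_gradmap
    (f' : (Fin n → ℝ) × (Fin n → ℝ) → ((Fin n → ℝ) × (Fin n → ℝ) →L[ℝ] ℝ))
    (σ : (Fin n → ℝ) × (Fin n → ℝ) → (Fin n → ℝ) × (Fin n → ℝ))
    {z : (Fin n → ℝ) × (Fin n → ℝ)}
    {Lσ : (Fin n → ℝ) × (Fin n → ℝ) →L[ℝ] (Fin n → ℝ) × (Fin n → ℝ)}
    {D : (Fin n → ℝ) × (Fin n → ℝ) →L[ℝ] ((Fin n → ℝ) × (Fin n → ℝ) →L[ℝ] ℝ)}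
    (hσ : HasFDerivAt σ Lσ z) (hD : HasFDerivAt f' D (σ z))
    (vs : Fin n → (Fin n → ℝ) × (Fin n → ℝ)) :
    HasFDerivAt (fun p => (fun i : Fin n => f' (σ p) (vs i)))
      (ContinuousLinearMap.pi fun i =>
        (ContinuousLinearMap.apply ℝ ℝ (vs i)).comp (D.comp Lσ)) z := by
  rw [hasFDerivAt_pi]
  intro i
  exact (ContinuousLinearMap.apply ℝ ℝ (vs i)).hasFDerivAt.comp z (hD.comp z hσ)

set_option maxHeartbeats 2000000 in
lemma key (n : ℕ) (g : (Fin n → ℝ) × (Fin n → ℝ) → ℝ)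
    (hg : ContDiffAt ℝ 2 g 0)
    (hM : IsUnit (Matrix.of fun i j : Fin n =>
        fderiv ℝ (fun p => fderiv ℝ g p (Pi.single i 1, 0)) 0 (0, Pi.single j 1))) :
    ∃ U : Set ((Fin n → ℝ) × (Fin n → ℝ)), IsOpen U ∧
      (gradFst n g 0, (0 : Fin n → ℝ)) ∈ U ∧
      ∃ Yhat : (Fin n → ℝ) × (Fin n → ℝ) → (Fin n → ℝ),
        ContDiffOn ℝ 1 Yhat U ∧
        Yhat (gradFst n g 0, (0 : Fin n → ℝ)) = 0 ∧
        (∀ p ∈ U, p.1 = gradFst n g (p.2, Yhat p)) ∧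
        (∀ z ∈ U, ∀ v w,
          stdOmega n (fderiv ℝ (genMap n g Yhat) z v) (fderiv ℝ (genMap n g Yhat) z w)
            = stdOmega n v w) ∧
        (∀ p ∉ U, Yhat p = fun _ => 1) ∧
        ∃ S : Set ((Fin n → ℝ) × (Fin n → ℝ)), IsOpen S ∧
          (0 : (Fin n → ℝ) × (Fin n → ℝ)) ∈ S ∧
          ∀ q ∈ S, (gradFst n g q, q.1) ∈ U ∧ Yhat (gradFst n g q, q.1) = q.2 := by
  classical
  obtain ⟨V₀, hV₀n, hgV₀⟩ := hg.contDiffOn le_rfl (by simp)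
  obtain ⟨V, hVsub, hVopen, hV0⟩ := mem_nhds_iff.1 hV₀n
  have hgV : ContDiffOn ℝ 2 g V := hgV₀.mono hVsub
  have hgat : ∀ q ∈ V, ContDiffAt ℝ 2 g q := fun q hq =>
    (hgV q hq).contDiffAt (hVopen.mem_nhds hq)
  have hf'cd : ∀ q ∈ V, ContDiffAt ℝ 1 (fderiv ℝ g) q := fun q hq =>
    (hgat q hq).fderiv_right (by norm_num)
  have hf'd : ∀ q ∈ V, DifferentiableAt ℝ (fderiv ℝ g) q := fun q hq =>
    (hf'cd q hq).differentiableAt (by norm_num)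
  set Ψ : (Fin n → ℝ) × (Fin n → ℝ) → (Fin n → ℝ) × (Fin n → ℝ) :=
    fun p => ((fun i => fderiv ℝ g p (Pi.single i 1, 0)), p.1) with hΨdef
  set D0 := fderiv ℝ (fderiv ℝ g) 0 with hD0
  set T : ((Fin n → ℝ) × (Fin n → ℝ)) →L[ℝ] ((Fin n → ℝ) × (Fin n → ℝ)) :=
    (ContinuousLinearMap.pi fun i =>
      (ContinuousLinearMap.apply ℝ ℝ ((Pi.single i 1 : Fin n → ℝ), (0 : Fin n → ℝ))).comp
        D0).prod (ContinuousLinearMap.fst ℝ _ _) with hT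
  have hΨT : HasFDerivAt Ψ T 0 := by
    refine HasFDerivAt.prodMk ?_ hasFDerivAt_fst
    have h1 := hasFDerivAt_gradmap (fderiv ℝ g) id (hasFDerivAt_id 0)
      ((hf'd 0 hV0).hasFDerivAt)
      (fun i => ((Pi.single i 1 : Fin n → ℝ), (0 : Fin n → ℝ)))
    simpa [ContinuousLinearMap.comp_id] using h1
  -- the matrix of `D0` in the mixed directions
  set M : Matrix (Fin n) (Fin n) ℝ :=
    Matrix.of (fun i j : Fin n =>
      D0 ((0 : Fin n → ℝ), Pi.single j 1) ((Pi.single i 1 : Fin n → ℝ), 0)) with hMdef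
  have hMunit : IsUnit M := by
    have hMat : ∀ i j : Fin n,
        fderiv ℝ (fun p => fderiv ℝ g p (Pi.single i 1, 0)) 0 (0, Pi.single j 1)
          = M i j := by
      intro i j
      have h1 : HasFDerivAt
          (fun p => fderiv ℝ g p ((Pi.single i 1 : Fin n → ℝ), (0 : Fin n → ℝ)))
          (D0.flip ((Pi.single i 1 : Fin n → ℝ), (0 : Fin n → ℝ))) 0 := by
        have h2 := (hf'd 0 hV0).hasFDerivAt.clm_apply
          (hasFDerivAt_const ((Pi.single i 1 : Fin n → ℝ), (0 : Fin n → ℝ)) 0)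
        simpa using h2
      rw [h1.fderiv]
      simp [hMdef]
    have : (Matrix.of fun i j : Fin n =>
        fderiv ℝ (fun p => fderiv ℝ g p (Pi.single i 1, 0)) 0 (0, Pi.single j 1)) = M := by
      apply Matrix.ext
      intro i j
      exact hMat i j
    rwa [this] at hM
  have hdet : IsUnit M.det := (Matrix.isUnit_iff_isUnit_det M).1 hMunit
  have hmulvec : ∀ v : Fin n → ℝ,
      (fun i => D0 ((0 : Fin n → ℝ), v) (Pi.single i 1, 0)) = M.mulVec v := by
    intro v; funext i
    have h1 := clm_snd_expand (D0.flip ((Pi.single i 1 : Fin n → ℝ), (0 : Fin n → ℝ))) v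
    simpa [Matrix.mulVec, dotProduct, ContinuousLinearMap.flip_apply, hMdef] using h1
  have hTinj : Function.Injective T := by
    intro p q hpq
    have h0 : T (p - q) = 0 := by rw [map_sub, hpq, sub_self]
    rw [hT] at h0
    simp only [ContinuousLinearMap.prod_apply, Prod.mk_eq_zero] at h0
    obtain ⟨h1, h2⟩ := h0
    have h3 : (fun i => D0 (p - q) (Pi.single i 1, 0)) = 0 := by
      funext i
      have := congrFun h1 i
      simpa [ContinuousLinearMap.pi_apply] using this
    have h2' : (p - q).1 = 0 := h2
    have hpq1 : (p - q) = ((0 : Fin n → ℝ), (p - q).2) := by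
      rw [← h2']
    have h4 : M.mulVec (p - q).2 = 0 := by
      rw [← hmulvec, ← hpq1]
      exact h3
    have h5 : (p - q).2 = 0 := by
      have h6 := congrArg (fun w => (M⁻¹).mulVec w) h4
      simpa [Matrix.mulVec_mulVec, Matrix.nonsing_inv_mul M hdet] using h6
    have : p - q = 0 := by
      rw [hpq1, h5]
      rfl
    exact sub_eq_zero.1 this
  have hTsurj : Function.Surjective T :=
    LinearMap.injective_iff_surjective.mp hTinj
  let e : ((Fin n → ℝ) × (Fin n → ℝ)) ≃ₗ[ℝ] ((Fin n → ℝ) × (Fin n → ℝ)) :=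
    LinearEquiv.ofBijective (T : ((Fin n → ℝ) × (Fin n → ℝ)) →ₗ[ℝ] ((Fin n → ℝ) × (Fin n → ℝ)))
      ⟨hTinj, hTsurj⟩
  let e' : ((Fin n → ℝ) × (Fin n → ℝ)) ≃L[ℝ] ((Fin n → ℝ) × (Fin n → ℝ)) :=
    e.toContinuousLinearEquiv
  have he' : (e' : ((Fin n → ℝ) × (Fin n → ℝ)) →L[ℝ] ((Fin n → ℝ) × (Fin n → ℝ))) = T := by
    apply ContinuousLinearMap.ext
    intro x
    rfl
  have hΨcd : ContDiffAt ℝ 1 Ψ 0 := by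
    refine ContDiffAt.prodMk ?_ contDiff_fst.contDiffAt
    rw [contDiffAt_pi]
    intro i
    exact (ContinuousLinearMap.apply ℝ ℝ
      ((Pi.single i 1 : Fin n → ℝ), (0 : Fin n → ℝ))).contDiff.contDiffAt.comp 0 (hf'cd 0 hV0)
  have hΨfd : HasFDerivAt Ψ
      (e' : ((Fin n → ℝ) × (Fin n → ℝ)) →L[ℝ] ((Fin n → ℝ) × (Fin n → ℝ))) 0 := by
    rw [he']; exact hΨT
  let Φ : OpenPartialHomeomorph ((Fin n → ℝ) × (Fin n → ℝ)) ((Fin n → ℝ) × (Fin n → ℝ)) :=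
    hΨcd.toOpenPartialHomeomorph Ψ hΨfd one_ne_zero
  have hΦcoe : ⇑Φ = Ψ := hΨcd.toOpenPartialHomeomorph_coe hΨfd one_ne_zero
  have hsource : (0 : (Fin n → ℝ) × (Fin n → ℝ)) ∈ Φ.source :=
    hΨcd.mem_toOpenPartialHomeomorph_source hΨfd one_ne_zero
  have htarget : Ψ 0 ∈ Φ.target :=
    hΨcd.image_mem_toOpenPartialHomeomorph_target hΨfd one_ne_zero
  have hinvcd : ContDiffAt ℝ 1 (⇑Φ.symm) (Ψ 0) := hΨcd.to_localInverse hΨfd one_ne_zero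
  obtain ⟨O₀, hO₀n, hinvcdO⟩ := hinvcd.contDiffOn le_rfl (by simp)
  obtain ⟨O, hOsub, hOopen, hO0⟩ := mem_nhds_iff.1 hO₀n
  set U := (Φ.target ∩ ⇑Φ.symm ⁻¹' (Φ.source ∩ V)) ∩ O with hU
  have hUopen : IsOpen U :=
    (Φ.isOpen_inter_preimage_symm (Φ.open_source.inter hVopen)).inter hOopen
  set Yhat : (Fin n → ℝ) × (Fin n → ℝ) → (Fin n → ℝ) :=
    fun p => if p ∈ U then (Φ.symm p).2 else (fun _ : Fin n => (1 : ℝ)) with hYdef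
  have hYU : ∀ p ∈ U, Yhat p = (Φ.symm p).2 := fun p hp => if_pos hp
  have hYnU : ∀ p ∉ U, Yhat p = fun _ => 1 := fun p hp => if_neg hp
  have hΨsymm : ∀ p ∈ U, Ψ (Φ.symm p) = p := by
    intro p hp
    rw [← hΦcoe]
    exact Φ.right_inv hp.1.1
  have hsymm_eq : ∀ p ∈ U, ((p.2, Yhat p) : (Fin n → ℝ) × (Fin n → ℝ)) = Φ.symm p := by
    intro p hp
    have h1 := hΨsymm p hp
    have h2 : (Φ.symm p).1 = p.2 := congrArg Prod.snd h1
    rw [hYU p hp, ← h2]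
  have hpt : ((gradFst n g 0, (0 : Fin n → ℝ)) : (Fin n → ℝ) × (Fin n → ℝ)) = Ψ 0 := rfl
  have hΨ0U : Ψ 0 ∈ U := by
    refine ⟨⟨htarget, ?_⟩, hO0⟩
    have h1 : Φ.symm (Ψ 0) = 0 := by
      rw [← hΦcoe]; exact Φ.left_inv hsource
    rw [mem_preimage, h1]
    exact ⟨hsource, hV0⟩
  have hYcd : ContDiffOn ℝ 1 Yhat U := by
    have h1 : ContDiffOn ℝ 1 (fun p => (Φ.symm p).2) O₀ :=
      contDiff_snd.comp_contDiffOn hinvcdO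
    exact (h1.mono (inter_subset_right.trans hOsub)).congr hYU
  have hc4 : ∀ p ∈ U, p.1 = gradFst n g (p.2, Yhat p) := by
    intro p hp
    have h1 : gradFst n g (p.2, Yhat p) = (Ψ (Φ.symm p)).1 := by
      rw [hsymm_eq p hp]; rfl
    rw [h1, hΨsymm p hp]
  have hsymp : ∀ z ∈ U, ∀ v w,
      stdOmega n (fderiv ℝ (genMap n g Yhat) z v) (fderiv ℝ (genMap n g Yhat) z w)
        = stdOmega n v w := by
    intro z hz v w
    have hsV : Φ.symm z ∈ V := hz.1.2.2
    have hσz : ((z.2, Yhat z) : (Fin n → ℝ) × (Fin n → ℝ)) = Φ.symm z := hsymm_eq z hz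
    have hYdiff : DifferentiableAt ℝ Yhat z :=
      ((hYcd.differentiableOn one_ne_zero) z hz).differentiableAt (hUopen.mem_nhds hz)
    set K := fderiv ℝ Yhat z with hKdef
    have hKd : HasFDerivAt Yhat K z := hYdiff.hasFDerivAt
    set Lσ := (ContinuousLinearMap.snd ℝ (Fin n → ℝ) (Fin n → ℝ)).prod K with hLσ
    have hσd : HasFDerivAt (fun p : (Fin n → ℝ) × (Fin n → ℝ) => ((p.2, Yhat p) :
        (Fin n → ℝ) × (Fin n → ℝ))) Lσ z := hasFDerivAt_snd.prodMk hKd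
    have hDd : DifferentiableAt ℝ (fderiv ℝ g) (Φ.symm z) := hf'd _ hsV
    set D := fderiv ℝ (fderiv ℝ g) (Φ.symm z) with hDdef
    have hDs : HasFDerivAt (fderiv ℝ g) D ((z.2, Yhat z) : (Fin n → ℝ) × (Fin n → ℝ)) := by
      rw [hσz]; exact hDd.hasFDerivAt
    have hgrad := hasFDerivAt_gradmap (fderiv ℝ g)
      (fun p => ((p.2, Yhat p) : (Fin n → ℝ) × (Fin n → ℝ))) hσd hDs
      (fun j => ((0 : Fin n → ℝ), Pi.single j 1))
    have hgm : HasFDerivAt (genMap n g Yhat)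
        ((-(ContinuousLinearMap.pi fun j =>
          (ContinuousLinearMap.apply ℝ ℝ ((0 : Fin n → ℝ), (Pi.single j 1 : Fin n → ℝ))).comp
            (D.comp Lσ))).prod K) z := HasFDerivAt.prodMk hgrad.neg hKd
    rw [hgm.fderiv]
    -- the implicit-function relation
    have himp : ∀ u : (Fin n → ℝ) × (Fin n → ℝ), ∀ i,
        D (Lσ u) (Pi.single i 1, 0) = u.1 i := by
      have hgrad2 := hasFDerivAt_gradmap (fderiv ℝ g)
        (fun p => ((p.2, Yhat p) : (Fin n → ℝ) × (Fin n → ℝ))) hσd hDs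
        (fun i => ((Pi.single i 1 : Fin n → ℝ), (0 : Fin n → ℝ)))
      have hev : (fun p : (Fin n → ℝ) × (Fin n → ℝ) => p.1) =ᶠ[𝓝 z]
          (fun p => (fun i : Fin n => fderiv ℝ g ((p.2, Yhat p) :
            (Fin n → ℝ) × (Fin n → ℝ)) (Pi.single i 1, (0 : Fin n → ℝ)))) := by
        filter_upwards [hUopen.mem_nhds hz] with p hp
        exact hc4 p hp
      have h2 : HasFDerivAt (fun p : (Fin n → ℝ) × (Fin n → ℝ) => p.1)
          (ContinuousLinearMap.pi fun i =>
            (ContinuousLinearMap.apply ℝ ℝ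
              ((Pi.single i 1 : Fin n → ℝ), (0 : Fin n → ℝ))).comp (D.comp Lσ)) z :=
        hgrad2.congr_of_eventuallyEq hev
      have h3 := h2.unique hasFDerivAt_fst
      intro u i
      have h4 := congrFun (ContinuousLinearMap.ext_iff.1 h3 u) i
      simpa [ContinuousLinearMap.pi_apply] using h4
    -- symmetry of the second derivative
    have hsym : ∀ a b : (Fin n → ℝ) × (Fin n → ℝ), D a b = D b a := by
      intro a b
      refine second_derivative_symmetric_of_eventually (f := g) ?_ hDd.hasFDerivAt a b
      filter_upwards [hVopen.mem_nhds hsV] with y hy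
      exact ((hgat y hy).differentiableAt (by norm_num)).hasFDerivAt
    -- compute both sides
    simp only [stdOmega, ContinuousLinearMap.prod_apply, ContinuousLinearMap.neg_apply,
      ContinuousLinearMap.pi_apply, ContinuousLinearMap.comp_apply,
      ContinuousLinearMap.apply_apply, Pi.neg_apply, neg_mul, Finset.sum_neg_distrib]
    have e1 : ∑ i, D (Lσ v) ((0 : Fin n → ℝ), Pi.single i 1) * K w i
        = D (Lσ v) ((0 : Fin n → ℝ), K w) := (clm_snd_expand _ _).symm
    have e2 : ∑ i, D (Lσ w) ((0 : Fin n → ℝ), Pi.single i 1) * K v i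
        = D (Lσ w) ((0 : Fin n → ℝ), K v) := (clm_snd_expand _ _).symm
    rw [e1, e2]
    have hLv : Lσ v = ((v.2, (0 : Fin n → ℝ)) : (Fin n → ℝ) × (Fin n → ℝ))
        + (((0 : Fin n → ℝ), K v) : (Fin n → ℝ) × (Fin n → ℝ)) := by
      rw [hLσ]
      simp [Prod.ext_iff]
    have hLw : Lσ w = ((w.2, (0 : Fin n → ℝ)) : (Fin n → ℝ) × (Fin n → ℝ))
        + (((0 : Fin n → ℝ), K w) : (Fin n → ℝ) × (Fin n → ℝ)) := by
      rw [hLσ]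
      simp [Prod.ext_iff]
    have hsplit1 : D (Lσ v) ((0 : Fin n → ℝ), K w)
        = D (v.2, (0 : Fin n → ℝ)) ((0 : Fin n → ℝ), K w)
          + D ((0 : Fin n → ℝ), K v) ((0 : Fin n → ℝ), K w) := by
      rw [hLv, map_add, ContinuousLinearMap.add_apply]
    have hsplit2 : D (Lσ w) ((0 : Fin n → ℝ), K v)
        = D (w.2, (0 : Fin n → ℝ)) ((0 : Fin n → ℝ), K v)
          + D ((0 : Fin n → ℝ), K w) ((0 : Fin n → ℝ), K v) := by
      rw [hLw, map_add, ContinuousLinearMap.add_apply]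
    have hcross : D ((0 : Fin n → ℝ), K v) ((0 : Fin n → ℝ), K w)
        = D ((0 : Fin n → ℝ), K w) ((0 : Fin n → ℝ), K v) := hsym _ _
    have hs1 : D (v.2, (0 : Fin n → ℝ)) ((0 : Fin n → ℝ), K w)
        = D ((0 : Fin n → ℝ), K w) (v.2, (0 : Fin n → ℝ)) := hsym _ _
    have hs2 : D (w.2, (0 : Fin n → ℝ)) ((0 : Fin n → ℝ), K v)
        = D ((0 : Fin n → ℝ), K v) (w.2, (0 : Fin n → ℝ)) := hsym _ _
    have hvb : D ((0 : Fin n → ℝ), K w) (v.2, (0 : Fin n → ℝ))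
        = D (Lσ w) (v.2, (0 : Fin n → ℝ)) - D (w.2, (0 : Fin n → ℝ)) (v.2, (0 : Fin n → ℝ)) := by
      rw [hLw, map_add, ContinuousLinearMap.add_apply]
      ring
    have hva : D ((0 : Fin n → ℝ), K v) (w.2, (0 : Fin n → ℝ))
        = D (Lσ v) (w.2, (0 : Fin n → ℝ)) - D (v.2, (0 : Fin n → ℝ)) (w.2, (0 : Fin n → ℝ)) := by
      rw [hLv, map_add, ContinuousLinearMap.add_apply]
      ring
    have him1 : D (Lσ w) (v.2, (0 : Fin n → ℝ)) = ∑ i, w.1 i * v.2 i := by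
      rw [clm_fst_expand]
      exact Finset.sum_congr rfl fun i _ => by rw [himp w i]
    have him2 : D (Lσ v) (w.2, (0 : Fin n → ℝ)) = ∑ i, v.1 i * w.2 i := by
      rw [clm_fst_expand]
      exact Finset.sum_congr rfl fun i _ => by rw [himp v i]
    have hsym3 : D (w.2, (0 : Fin n → ℝ)) (v.2, (0 : Fin n → ℝ))
        = D (v.2, (0 : Fin n → ℝ)) (w.2, (0 : Fin n → ℝ)) := hsym _ _
    linarith [hsplit1, hsplit2, hcross, hs1, hs2, hvb, hva, him1, him2, hsym3]
  -- the set S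
  have hf'cont : ContinuousOn (fderiv ℝ g) V :=
    hgV.continuousOn_fderiv_of_isOpen hVopen (by norm_num)
  have hΨcont : ContinuousOn Ψ V := by
    refine ContinuousOn.prodMk ?_ continuous_fst.continuousOn
    refine continuousOn_pi.mpr fun i => ?_
    exact (ContinuousLinearMap.apply ℝ ℝ
      ((Pi.single i 1 : Fin n → ℝ), (0 : Fin n → ℝ))).continuous.comp_continuousOn hf'cont
  set S := (V ∩ Φ.source) ∩ Ψ ⁻¹' U with hSdef
  have hSopen : IsOpen S :=
    (hΨcont.mono inter_subset_left).isOpen_inter_preimage (hVopen.inter Φ.open_source) hUopen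
  have hS0 : (0 : (Fin n → ℝ) × (Fin n → ℝ)) ∈ S := ⟨⟨hV0, hsource⟩, hΨ0U⟩
  refine ⟨U, hUopen, by rw [hpt]; exact hΨ0U, Yhat, hYcd, ?_, hc4, hsymp, hYnU,
    S, hSopen, hS0, ?_⟩
  · rw [hpt, hYU _ hΨ0U]
    have h1 : Φ.symm (Ψ 0) = 0 := by rw [← hΦcoe]; exact Φ.left_inv hsource
    rw [h1]
    rfl
  · intro q hq
    have hΨqU : Ψ q ∈ U := hq.2
    have h1 : ((gradFst n g q, q.1) : (Fin n → ℝ) × (Fin n → ℝ)) = Ψ q := rfl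
    refine ⟨by rw [h1]; exact hΨqU, ?_⟩
    rw [h1, hYU _ hΨqU]
    have h2 : Φ.symm (Ψ q) = q := by rw [← hΦcoe]; exact Φ.left_inv hq.1.2
    rw [h2]

end Helpers

set_option maxHeartbeats 2000000 in
/-- realization of any gradient-zero problem `∇h = 0` in the separated
Lagrangian boundary value problem generated by `B`: with
`g(y,Y) = h(y) + c·Σⱼ(Yⱼ+yⱼ)² + B(y,Y)` and `(∂²B/∂y∂Y)(0,0) + 2cI` invertible,
the symplectic map `φ` generated by `g` satisfies
`φ(∇_yB(y,Y), y) = (−∇_YB(y,Y), Y)` exactly at the critical points of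
`(y,Y) ↦ h(y) + c·Σⱼ(Yⱼ+yⱼ)²`. -/
theorem stmt_18 (n : ℕ) (h : (Fin n → ℝ) → ℝ) (B : (Fin n → ℝ) × (Fin n → ℝ) → ℝ)
    (hh : ContDiffAt ℝ 2 h 0)
    (hB : ContDiffAt ℝ 2 B ((0, 0) : (Fin n → ℝ) × (Fin n → ℝ)))
    (c : ℝ)
    (hmix : IsUnit ((Matrix.of fun i j =>
        fderiv ℝ (fun p => fderiv ℝ B p (Pi.single i 1, 0))
          ((0, 0) : (Fin n → ℝ) × (Fin n → ℝ)) (0, Pi.single j 1))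
        + (2 * c) • (1 : Matrix (Fin n) (Fin n) ℝ)))
    (g : (Fin n → ℝ) × (Fin n → ℝ) → ℝ)
    (hgdef : ∀ p : (Fin n → ℝ) × (Fin n → ℝ),
      g p = h p.1 + c * ∑ j, (p.2 j + p.1 j) ^ 2 + B p) :
    ∃ U : Set ((Fin n → ℝ) × (Fin n → ℝ)), IsOpen U ∧
      (gradFst n g (0, 0), (0 : Fin n → ℝ)) ∈ U ∧
      ∃ Yhat : (Fin n → ℝ) × (Fin n → ℝ) → (Fin n → ℝ),
        ContDiffOn ℝ 1 Yhat U ∧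
        Yhat (gradFst n g (0, 0), (0 : Fin n → ℝ)) = 0 ∧
        (∀ p ∈ U, p.1 = gradFst n g (p.2, Yhat p)) ∧
        (∀ z ∈ U, ∀ v w,
          stdOmega n (fderiv ℝ (genMap n g Yhat) z v) (fderiv ℝ (genMap n g Yhat) z w)
            = stdOmega n v w) ∧
        ∃ W : Set ((Fin n → ℝ) × (Fin n → ℝ)), IsOpen W ∧
          ((0, 0) : (Fin n → ℝ) × (Fin n → ℝ)) ∈ W ∧
          ∀ q ∈ W,
            (genMap n g Yhat (gradFst n B q, q.1) = (-(gradSnd n B q), q.2) ↔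
              fderiv ℝ (fun r : (Fin n → ℝ) × (Fin n → ℝ) =>
                h r.1 + c * ∑ j, (r.2 j + r.1 j) ^ 2) q = 0) := by
  classical
  rcases Nat.eq_zero_or_pos n with hn0 | hnpos
  · subst hn0
    refine ⟨Set.univ, isOpen_univ, trivial, fun _ => 0, contDiffOn_const, rfl,
      fun p _ => funext fun i => i.elim0, ?_, Set.univ, isOpen_univ, trivial, ?_⟩
    · intro z _ v w
      simp [stdOmega]
    · intro q _
      constructor
      · intro _
        exact (clm_eq_zero_iff _).2 ⟨fun i => i.elim0, fun j => j.elim0⟩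
      · intro _
        exact Prod.ext (funext fun i => i.elim0) (funext fun i => i.elim0)
  -- main case
  set i₀ : Fin n := ⟨0, hnpos⟩ with hi₀
  obtain ⟨Vh₀, hVh₀n, hhV₀⟩ := hh.contDiffOn le_rfl (by simp)
  obtain ⟨Vh, hVhsub, hVhopen, hVh0⟩ := mem_nhds_iff.1 hVh₀n
  have hhV : ContDiffOn ℝ 2 h Vh := hhV₀.mono hVhsub
  obtain ⟨VB₀, hVB₀n, hBV₀⟩ := hB.contDiffOn le_rfl (by simp)
  obtain ⟨VB, hVBsub, hVBopen, hVB0⟩ := mem_nhds_iff.1 hVB₀n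
  have hBV : ContDiffOn ℝ 2 B VB := hBV₀.mono hVBsub
  set V : Set ((Fin n → ℝ) × (Fin n → ℝ)) := (Prod.fst ⁻¹' Vh) ∩ VB with hVdef
  have hVopen : IsOpen V := (hVhopen.preimage continuous_fst).inter hVBopen
  have hV0 : ((0, 0) : (Fin n → ℝ) × (Fin n → ℝ)) ∈ V := ⟨hVh0, hVB0⟩
  set Tj : Fin n → (((Fin n → ℝ) × (Fin n → ℝ)) →L[ℝ] ℝ) := fun j =>
    (ContinuousLinearMap.proj j).comp (ContinuousLinearMap.snd ℝ (Fin n → ℝ) (Fin n → ℝ))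
    + (ContinuousLinearMap.proj j).comp (ContinuousLinearMap.fst ℝ (Fin n → ℝ) (Fin n → ℝ))
    with hTjdef
  have hTjval : ∀ j, ∀ p : (Fin n → ℝ) × (Fin n → ℝ), Tj j p = p.2 j + p.1 j := by
    intro j p
    simp [hTjdef]
  have hQd : ∀ p : (Fin n → ℝ) × (Fin n → ℝ),
      HasFDerivAt (fun p : (Fin n → ℝ) × (Fin n → ℝ) => c * ∑ j, (p.2 j + p.1 j) ^ 2)
        (c • ∑ j, (2 * (p.2 j + p.1 j)) • (Tj j)) p := by
    intro p
    have h1 : ∀ j : Fin n, HasFDerivAt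
        (fun p : (Fin n → ℝ) × (Fin n → ℝ) => (p.2 j + p.1 j) ^ 2)
        ((2 * (p.2 j + p.1 j)) • (Tj j)) p := by
      intro j
      have h2 : HasFDerivAt (fun p : (Fin n → ℝ) × (Fin n → ℝ) => p.2 j + p.1 j) (Tj j) p :=
        (Tj j).hasFDerivAt
      have h3 := h2.mul h2
      have h4 : (fun p : (Fin n → ℝ) × (Fin n → ℝ) => (p.2 j + p.1 j) ^ 2)
          = fun p : (Fin n → ℝ) × (Fin n → ℝ) => (p.2 j + p.1 j) * (p.2 j + p.1 j) := by
        funext p; ring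
      rw [h4, two_mul, add_smul]
      exact h3
    have h4 := HasFDerivAt.sum (fun j (_ : j ∈ Finset.univ) => h1 j)
    have h5 := h4.const_mul c
    simpa [Finset.smul_sum] using h5
  have hQfst : ∀ p : (Fin n → ℝ) × (Fin n → ℝ), ∀ i,
      (c • ∑ j, (2 * (p.2 j + p.1 j)) • (Tj j)) (Pi.single i 1, (0 : Fin n → ℝ))
        = 2 * c * (p.2 i + p.1 i) := by
    intro p i
    rw [ContinuousLinearMap.smul_apply, ContinuousLinearMap.sum_apply]
    have h6 : ∀ j, ((2 * (p.2 j + p.1 j)) • (Tj j)) ((Pi.single i 1 : Fin n → ℝ), (0 : Fin n → ℝ))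
        = (2 * (p.2 j + p.1 j)) * (if i = j then 1 else 0) := by
      intro j
      rw [ContinuousLinearMap.smul_apply, hTjval]
      simp [Pi.single_apply, eq_comm]
    rw [Finset.sum_congr rfl (fun j _ => h6 j)]
    simp [Finset.sum_ite_eq, mul_comm]
    ring
  have hQsnd : ∀ p : (Fin n → ℝ) × (Fin n → ℝ), ∀ j,
      (c • ∑ k, (2 * (p.2 k + p.1 k)) • (Tj k)) ((0 : Fin n → ℝ), Pi.single j 1)
        = 2 * c * (p.2 j + p.1 j) := by
    intro p j
    rw [ContinuousLinearMap.smul_apply, ContinuousLinearMap.sum_apply]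
    have h6 : ∀ k, ((2 * (p.2 k + p.1 k)) • (Tj k)) ((0 : Fin n → ℝ), (Pi.single j 1 : Fin n → ℝ))
        = (2 * (p.2 k + p.1 k)) * (if j = k then 1 else 0) := by
      intro k
      rw [ContinuousLinearMap.smul_apply, hTjval]
      simp [Pi.single_apply, eq_comm]
    rw [Finset.sum_congr rfl (fun k _ => h6 k)]
    simp [Finset.sum_ite_eq, mul_comm]
    ring
  -- differentiability pieces
  have hhd : ∀ q : (Fin n → ℝ) × (Fin n → ℝ), q ∈ V →
      HasFDerivAt (fun p : (Fin n → ℝ) × (Fin n → ℝ) => h p.1)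
        ((fderiv ℝ h q.1).comp (ContinuousLinearMap.fst ℝ (Fin n → ℝ) (Fin n → ℝ))) q := by
    intro q hq
    have h1 : DifferentiableAt ℝ h q.1 :=
      ((hhV q.1 hq.1).contDiffAt (hVhopen.mem_nhds hq.1)).differentiableAt (by norm_num)
    exact h1.hasFDerivAt.comp q hasFDerivAt_fst
  have hBd : ∀ q : (Fin n → ℝ) × (Fin n → ℝ), q ∈ V → HasFDerivAt B (fderiv ℝ B q) q := by
    intro q hq
    exact (((hBV q hq.2).contDiffAt (hVBopen.mem_nhds hq.2)).differentiableAt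
      (by norm_num)).hasFDerivAt
  -- derivative of the critical-point function
  have hkd : ∀ q : (Fin n → ℝ) × (Fin n → ℝ), q ∈ V →
      HasFDerivAt (fun r : (Fin n → ℝ) × (Fin n → ℝ) => h r.1 + c * ∑ j, (r.2 j + r.1 j) ^ 2)
        ((fderiv ℝ h q.1).comp (ContinuousLinearMap.fst ℝ (Fin n → ℝ) (Fin n → ℝ))
          + (c • ∑ j, (2 * (q.2 j + q.1 j)) • (Tj j))) q := by
    intro q hq
    exact (hhd q hq).add (hQd q)
  have hgfd : ∀ q : (Fin n → ℝ) × (Fin n → ℝ), q ∈ V →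
      HasFDerivAt g
        (((fderiv ℝ h q.1).comp (ContinuousLinearMap.fst ℝ (Fin n → ℝ) (Fin n → ℝ))
          + (c • ∑ j, (2 * (q.2 j + q.1 j)) • (Tj j))) + fderiv ℝ B q) q := by
    intro q hq
    have h4 := (hkd q hq).add (hBd q hq)
    have hgeq : g = fun p : (Fin n → ℝ) × (Fin n → ℝ) =>
        (h p.1 + c * ∑ j, (p.2 j + p.1 j) ^ 2) + B p := by
      funext p; rw [hgdef p]
    rw [hgeq]
    exact h4
  -- evaluation of the critical-point derivative
  have hLfst : ∀ q : (Fin n → ℝ) × (Fin n → ℝ), ∀ i,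
      ((fderiv ℝ h q.1).comp (ContinuousLinearMap.fst ℝ (Fin n → ℝ) (Fin n → ℝ))
        + (c • ∑ j, (2 * (q.2 j + q.1 j)) • (Tj j))) ((Pi.single i 1 : Fin n → ℝ), (0 : Fin n → ℝ))
      = fderiv ℝ h q.1 (Pi.single i 1) + 2 * c * (q.2 i + q.1 i) := by
    intro q i
    rw [ContinuousLinearMap.add_apply, hQfst q i]
    simp
  have hLsnd : ∀ q : (Fin n → ℝ) × (Fin n → ℝ), ∀ j,
      ((fderiv ℝ h q.1).comp (ContinuousLinearMap.fst ℝ (Fin n → ℝ) (Fin n → ℝ))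
        + (c • ∑ k, (2 * (q.2 k + q.1 k)) • (Tj k))) ((0 : Fin n → ℝ), (Pi.single j 1 : Fin n → ℝ))
      = 2 * c * (q.2 j + q.1 j) := by
    intro q j
    rw [ContinuousLinearMap.add_apply, hQsnd q j]
    simp
  -- gradient formulas on V
  have hGF : ∀ q ∈ V, ∀ i, gradFst n g q i
      = fderiv ℝ h q.1 (Pi.single i 1) + 2 * c * (q.2 i + q.1 i) + gradFst n B q i := by
    intro q hq i
    have h1 : gradFst n g q i = ((((fderiv ℝ h q.1).comp
        (ContinuousLinearMap.fst ℝ (Fin n → ℝ) (Fin n → ℝ))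
        + (c • ∑ j, (2 * (q.2 j + q.1 j)) • (Tj j))) + fderiv ℝ B q) :
          ((Fin n → ℝ) × (Fin n → ℝ)) →L[ℝ] ℝ) ((Pi.single i 1 : Fin n → ℝ), (0 : Fin n → ℝ)) := by
      have h2 := (hgfd q hq).fderiv
      show fderiv ℝ g q ((Pi.single i 1 : Fin n → ℝ), (0 : Fin n → ℝ)) = _
      rw [h2]
    rw [h1, ContinuousLinearMap.add_apply, hLfst q i]
    rfl
  have hGS : ∀ q ∈ V, ∀ j, gradSnd n g q j
      = 2 * c * (q.2 j + q.1 j) + gradSnd n B q j := by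
    intro q hq j
    have h1 : gradSnd n g q j = ((((fderiv ℝ h q.1).comp
        (ContinuousLinearMap.fst ℝ (Fin n → ℝ) (Fin n → ℝ))
        + (c • ∑ k, (2 * (q.2 k + q.1 k)) • (Tj k))) + fderiv ℝ B q) :
          ((Fin n → ℝ) × (Fin n → ℝ)) →L[ℝ] ℝ) ((0 : Fin n → ℝ), (Pi.single j 1 : Fin n → ℝ)) := by
      have h2 := (hgfd q hq).fderiv
      show fderiv ℝ g q ((0 : Fin n → ℝ), (Pi.single j 1 : Fin n → ℝ)) = _
      rw [h2]
    rw [h1, ContinuousLinearMap.add_apply, hLsnd q j]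
    rfl
  -- smoothness of g
  have hg2 : ContDiffAt ℝ 2 g (0 : (Fin n → ℝ) × (Fin n → ℝ)) := by
    have hgeq : g = fun p : (Fin n → ℝ) × (Fin n → ℝ) =>
        (h p.1 + c * ∑ j, (p.2 j + p.1 j) ^ 2) + B p := by
      funext p; rw [hgdef p]
    rw [hgeq]
    have h1 : ContDiffAt ℝ 2 (fun p : (Fin n → ℝ) × (Fin n → ℝ) => h p.1)
        ((0, 0) : (Fin n → ℝ) × (Fin n → ℝ)) :=
      hh.comp ((0, 0) : (Fin n → ℝ) × (Fin n → ℝ)) contDiffAt_fst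
    have h2 : ContDiff ℝ 2 (fun p : (Fin n → ℝ) × (Fin n → ℝ) => c * ∑ j, (p.2 j + p.1 j) ^ 2) := by
      refine contDiff_const.mul (ContDiff.sum fun j _ => ?_)
      have h3 : ContDiff ℝ 2 fun p : (Fin n → ℝ) × (Fin n → ℝ) => p.2 j + p.1 j := (Tj j).contDiff
      exact h3.pow 2
    exact ((h1.add h2.contDiffAt).add hB : )
  -- the matrix hypothesis for `key`
  have hMkey : IsUnit (Matrix.of fun i j : Fin n =>
      fderiv ℝ (fun p => fderiv ℝ g p (Pi.single i 1, 0)) 0 (0, Pi.single j 1)) := by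
    have hhd2 : DifferentiableAt ℝ (fderiv ℝ h) 0 :=
      (hh.fderiv_right (m := 1) (by norm_num)).differentiableAt (by norm_num)
    have hBd2 : DifferentiableAt ℝ (fderiv ℝ B) ((0, 0) : (Fin n → ℝ) × (Fin n → ℝ)) :=
      (hB.fderiv_right (m := 1) (by norm_num)).differentiableAt (by norm_num)
    have hmat : ∀ i j : Fin n,
        fderiv ℝ (fun p => fderiv ℝ g p (Pi.single i 1, 0)) 0 (0, Pi.single j 1)
        = fderiv ℝ (fun p => fderiv ℝ B p (Pi.single i 1, 0))
            ((0, 0) : (Fin n → ℝ) × (Fin n → ℝ)) (0, Pi.single j 1)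
          + (2 * c) * (if i = j then 1 else 0) := by
      intro i j
      have hev : (fun p : (Fin n → ℝ) × (Fin n → ℝ) =>
          fderiv ℝ g p ((Pi.single i 1 : Fin n → ℝ), (0 : Fin n → ℝ))) =ᶠ[𝓝 (0 : (Fin n → ℝ) × (Fin n → ℝ))]
          (fun p => fderiv ℝ h p.1 (Pi.single i 1) + 2 * c * (p.2 i + p.1 i)
            + fderiv ℝ B p ((Pi.single i 1 : Fin n → ℝ), (0 : Fin n → ℝ))) := by
        filter_upwards [hVopen.mem_nhds hV0] with p hp
        exact hGF p hp i
      have h1 : HasFDerivAt (fun y : Fin n → ℝ => fderiv ℝ h y (Pi.single i 1))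
          ((fderiv ℝ (fderiv ℝ h) 0).flip (Pi.single i 1)) 0 := by
        have h2 := hhd2.hasFDerivAt.clm_apply (hasFDerivAt_const (Pi.single i 1 : Fin n → ℝ) (0 : Fin n → ℝ))
        simpa using h2
      have h1' : HasFDerivAt (fun p : (Fin n → ℝ) × (Fin n → ℝ) => fderiv ℝ h p.1 (Pi.single i 1))
          (((fderiv ℝ (fderiv ℝ h) 0).flip (Pi.single i 1)).comp
            (ContinuousLinearMap.fst ℝ (Fin n → ℝ) (Fin n → ℝ)))
          ((0, 0) : (Fin n → ℝ) × (Fin n → ℝ)) := h1.comp (f := Prod.fst) ((0, 0) : (Fin n → ℝ) × (Fin n → ℝ)) hasFDerivAt_fst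
      have h2 : HasFDerivAt (fun p : (Fin n → ℝ) × (Fin n → ℝ) => 2 * c * (p.2 i + p.1 i))
          ((2 * c) • (Tj i)) ((0, 0) : (Fin n → ℝ) × (Fin n → ℝ)) := by
        have htj : HasFDerivAt (fun p : (Fin n → ℝ) × (Fin n → ℝ) => Tj i p) (Tj i)
            ((0, 0) : (Fin n → ℝ) × (Fin n → ℝ)) := (Tj i).hasFDerivAt
        have h3 := htj.const_mul (2 * c)
        have h4 : (fun p : (Fin n → ℝ) × (Fin n → ℝ) => 2 * c * (p.2 i + p.1 i))
            = fun p : (Fin n → ℝ) × (Fin n → ℝ) => 2 * c * (Tj i p) := by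
          funext p; rw [hTjval]
        rw [h4]
        exact h3
      have h3 : HasFDerivAt (fun p : (Fin n → ℝ) × (Fin n → ℝ) =>
          fderiv ℝ B p ((Pi.single i 1 : Fin n → ℝ), (0 : Fin n → ℝ)))
          ((fderiv ℝ (fderiv ℝ B) ((0, 0) : (Fin n → ℝ) × (Fin n → ℝ))).flip
            ((Pi.single i 1 : Fin n → ℝ), (0 : Fin n → ℝ)))
          ((0, 0) : (Fin n → ℝ) × (Fin n → ℝ)) := by
        have h4 := hBd2.hasFDerivAt.clm_apply
          (hasFDerivAt_const ((Pi.single i 1 : Fin n → ℝ), (0 : Fin n → ℝ))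
            ((0, 0) : (Fin n → ℝ) × (Fin n → ℝ)))
        simpa using h4
      have h5 := ((h1'.add h2).add h3).congr_of_eventuallyEq hev
      have h5' : fderiv ℝ (fun p : (Fin n → ℝ) × (Fin n → ℝ) =>
          fderiv ℝ g p ((Pi.single i 1 : Fin n → ℝ), (0 : Fin n → ℝ)))
          (0 : (Fin n → ℝ) × (Fin n → ℝ)) = _ := h5.fderiv
      rw [h5']
      rw [show fderiv ℝ (fun p => fderiv ℝ B p (Pi.single i 1, 0))
            ((0, 0) : (Fin n → ℝ) × (Fin n → ℝ))
          = (fderiv ℝ (fderiv ℝ B) ((0, 0) : (Fin n → ℝ) × (Fin n → ℝ))).flip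
            ((Pi.single i 1 : Fin n → ℝ), (0 : Fin n → ℝ)) from h3.fderiv]
      rw [ContinuousLinearMap.add_apply, ContinuousLinearMap.add_apply]
      have h6 : ((fderiv ℝ (fderiv ℝ h) 0).flip (Pi.single i 1)).comp
          (ContinuousLinearMap.fst ℝ (Fin n → ℝ) (Fin n → ℝ))
          ((0 : Fin n → ℝ), (Pi.single j 1 : Fin n → ℝ)) = 0 := by
        rw [ContinuousLinearMap.comp_apply]
        simp
      rw [h6]
      have h7 : ((2 * c) • (Tj i)) ((0 : Fin n → ℝ), (Pi.single j 1 : Fin n → ℝ))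
          = 2 * c * (if i = j then 1 else 0) := by
        rw [ContinuousLinearMap.smul_apply, hTjval]
        simp [Pi.single_apply, eq_comm]
      rw [h7]
      rw [ContinuousLinearMap.flip_apply]
      ring
    have hEq : (Matrix.of fun i j : Fin n =>
        fderiv ℝ (fun p => fderiv ℝ g p (Pi.single i 1, 0)) 0 (0, Pi.single j 1))
        = (Matrix.of fun i j =>
        fderiv ℝ (fun p => fderiv ℝ B p (Pi.single i 1, 0))
          ((0, 0) : (Fin n → ℝ) × (Fin n → ℝ)) (0, Pi.single j 1))
        + (2 * c) • (1 : Matrix (Fin n) (Fin n) ℝ) := by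
      apply Matrix.ext
      intro i j
      rw [Matrix.add_apply, Matrix.smul_apply, Matrix.one_apply]
      rw [Matrix.of_apply, Matrix.of_apply, hmat i j]
      simp [mul_ite]
    rw [hEq]
    exact hmix
  obtain ⟨U, hUopen, hptU, Yhat, hYcd, hY0, hc4, hsymp, hYjunk, S, hSopen, hS0, hSspec⟩ :=
    key n g hg2 hMkey
  refine ⟨U, hUopen, hptU, Yhat, hYcd, hY0, hc4, hsymp, ?_⟩
  set W := (S ∩ V) ∩ {q : (Fin n → ℝ) × (Fin n → ℝ) | q.2 i₀ < 1} with hWdef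
  have hWopen : IsOpen W := (hSopen.inter hVopen).inter
    (isOpen_lt ((continuous_apply i₀).comp continuous_snd) continuous_const)
  have hW0 : ((0, 0) : (Fin n → ℝ) × (Fin n → ℝ)) ∈ W := by
    refine ⟨⟨hS0, hV0⟩, ?_⟩
    show ((0, 0) : (Fin n → ℝ) × (Fin n → ℝ)).2 i₀ < 1
    norm_num
  refine ⟨W, hWopen, hW0, ?_⟩
  intro q hq
  obtain ⟨⟨hqS, hqV⟩, hq2⟩ := hq
  have hq2' : q.2 i₀ < 1 := hq2
  constructor
  · intro heq
    simp only [genMap] at heq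
    rw [Prod.mk.injEq] at heq
    obtain ⟨h1st, h2nd⟩ := heq
    have hUmem : ((gradFst n B q, q.1) : (Fin n → ℝ) × (Fin n → ℝ)) ∈ U := by
      by_contra hnot
      rw [hYjunk _ hnot] at h2nd
      have hcontr : (1 : ℝ) = q.2 i₀ := by simpa using congrFun h2nd i₀
      rw [← hcontr] at hq2'
      exact lt_irrefl 1 hq2'
    have hgseq : gradSnd n g q = gradSnd n B q := by
      rw [h2nd] at h1st
      exact neg_injective h1st
    have hBz : ∀ j, 2 * c * (q.2 j + q.1 j) = 0 := by
      intro j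
      have h5 := hGS q hqV j
      have h6 := congrFun hgseq j
      linarith
    have hxg2 : gradFst n B q = gradFst n g q := by
      have h11 := hc4 _ hUmem
      rw [h2nd] at h11
      exact h11
    have hAz : ∀ i, fderiv ℝ h q.1 (Pi.single i 1) + 2 * c * (q.2 i + q.1 i) = 0 := by
      intro i
      have h7 := hGF q hqV i
      have h8 := congrFun hxg2 i
      linarith
    rw [(hkd q hqV).fderiv]
    refine (clm_eq_zero_iff _).2 ⟨fun i => ?_, fun j => ?_⟩
    · rw [hLfst q i]; exact hAz i
    · rw [hLsnd q j]; exact hBz j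
  · intro hcrit
    rw [(hkd q hqV).fderiv, clm_eq_zero_iff] at hcrit
    obtain ⟨hA, hB2⟩ := hcrit
    have hAz : ∀ i, fderiv ℝ h q.1 (Pi.single i 1) + 2 * c * (q.2 i + q.1 i) = 0 := by
      intro i
      have := hA i; rwa [hLfst q i] at this
    have hBz : ∀ j, 2 * c * (q.2 j + q.1 j) = 0 := by
      intro j
      have := hB2 j; rwa [hLsnd q j] at this
    have hgF : gradFst n B q = gradFst n g q := by
      funext i
      have h7 := hGF q hqV i
      have h8 := hAz i
      linarith
    have hgS : gradSnd n g q = gradSnd n B q := by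
      funext j
      have h9 := hGS q hqV j
      have h10 := hBz j
      linarith
    obtain ⟨hu, hy⟩ := hSspec q hqS
    rw [hgF]
    simp only [genMap]
    rw [Prod.mk.injEq]
    refine ⟨?_, hy⟩
    rw [hy, ← hgS]
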